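/- arXiv:2512.14888 — 4 statements merged into one kernel-verified Lean document; each statement's English description precedes it below -/
import Mathlib

section
/- Let k be a field, s ≥ 1, f_1,…,f_s ∈ k[X_0,X_1,…,X_s], p ∈ k, and ξ = (ξ_1,…,ξ_s) ∈ k^s such that f_i(p,ξ) = 0 for 1 ≤ i ≤ s and det((∂f_i/∂X_j)(p,ξ))_{1≤i,j≤s} ≠ 0. In k⟦t⟧, define recursively R^{(0)} := (ξ_1,…,ξ_s) (constant power series) and, whenever det J(p+t, R^{(j)}) is a unit of k⟦t⟧, R^{(j+1)} := R^{(j)} − J(p+t, R^{(j)})^{-1}·(f_1(p+t,R^{(j)}),…,f_s(p+t,R^{(j)}))ᵗ, where J := (∂f_i/∂X_j)_{1≤i,j≤s}. Then the whole sequence (R^{(j)})_{j≥0} is well defined, and for every j ≥ 0: (1) f_i(p+t, R^{(j)}) lies in the ideal (t^{2^j}) of k⟦t⟧ for every 1 ≤ i ≤ s; (2) det J(p+t, R^{(j)}) has nonzero constant term, i.e. is a unit of k⟦t⟧; (3) R^{(j+1)}_m − R^{(j)}_m ∈ (t^{2^j}) for every 1 ≤ m ≤ s. -/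
noncomputable section

open MvPolynomial

variable {k : Type*}

/-- Substitution `X₀ ↦ p + t`, `X_m ↦ R m` of a polynomial `f ∈ k[X₀, X₁, …, X_s]` into the
power series ring `k⟦t⟧`. -/
def psSubst [Field k] {s : ℕ} (p : k) (R : Fin s → PowerSeries k)
    (f : MvPolynomial (Fin (s + 1)) k) : PowerSeries k :=
  aeval (fun v : Fin (s + 1) =>
    Fin.cases (PowerSeries.C p + PowerSeries.X) R v) f

/-- The Jacobian matrix `J(p+t, R)` of the system `f` with respect to `X₁,…,X_s`. -/
def psJac [Field k] {s : ℕ} (f : Fin s → MvPolynomial (Fin (s + 1)) k) (p : k)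
    (R : Fin s → PowerSeries k) : Matrix (Fin s) (Fin s) (PowerSeries k) :=
  Matrix.of fun i m => psSubst p R (pderiv (Fin.succ m) (f i))

/-- One Newton–Hensel step `R ↦ R − J(p+t,R)⁻¹ · f(p+t,R)`; the inverse matrix is expressed
as `(det J)⁻¹ · adjugate J`, via `Ring.inverse` (which returns the genuine inverse whenever
`det J` is a unit). -/
def newtonStep [Field k] {s : ℕ} (f : Fin s → MvPolynomial (Fin (s + 1)) k) (p : k)
    (R : Fin s → PowerSeries k) : Fin s → PowerSeries k :=
  fun m => R m -
    Ring.inverse (psJac f p R).det *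
      ((psJac f p R).adjugate.mulVec fun i => psSubst p R (f i)) m

/-- The Newton–Hensel sequence `R⁽⁰⁾ := ξ`, `R⁽ʲ⁺¹⁾ := N(R⁽ʲ⁾)`. -/
def newtonSeq [Field k] {s : ℕ} (f : Fin s → MvPolynomial (Fin (s + 1)) k) (p : k)
    (ξ : Fin s → k) : ℕ → Fin s → PowerSeries k
  | 0 => fun m => PowerSeries.C (ξ m)
  | j + 1 => newtonStep f p (newtonSeq f p ξ j)

lemma psSubst_X [Field k] {s : ℕ} (p : k) (R : Fin s → PowerSeries k) (v : Fin (s+1)) :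
    psSubst p R (X v) = Fin.cases (PowerSeries.C p + PowerSeries.X) R v := by
  simp [psSubst]

lemma constantCoeff_psSubst [Field k] {s : ℕ} (p : k) (R : Fin s → PowerSeries k)
    (g : MvPolynomial (Fin (s + 1)) k) :
    PowerSeries.constantCoeff (psSubst p R g) =
      eval (fun v : Fin (s + 1) =>
        Fin.cases p (fun m => PowerSeries.constantCoeff (R m)) v) g := by
  induction g using MvPolynomial.induction_on with
  | C a => simp [psSubst, PowerSeries.algebraMap_apply]
  | add g₁ g₂ h₁ h₂ => simp only [psSubst, map_add] at *; rw [h₁, h₂]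
  | mul_X g v ih =>
      simp only [psSubst, map_mul] at *
      rw [ih]
      congr 1
      cases v using Fin.cases with
      | zero => simp
      | succ m => simp

lemma psSubst_add [Field k] {s : ℕ} (p : k) (R : Fin s → PowerSeries k)
    (a b : MvPolynomial (Fin (s + 1)) k) :
    psSubst p R (a + b) = psSubst p R a + psSubst p R b := map_add _ _ _

lemma psSubst_mul [Field k] {s : ℕ} (p : k) (R : Fin s → PowerSeries k)
    (a b : MvPolynomial (Fin (s + 1)) k) :
    psSubst p R (a * b) = psSubst p R a * psSubst p R b := map_mul _ _ _

lemma psSubst_taylor [Field k] {s : ℕ} (p : k) (R R' : Fin s → PowerSeries k)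
    (I : Ideal (PowerSeries k)) (h : ∀ m, R' m - R m ∈ I)
    (g : MvPolynomial (Fin (s + 1)) k) :
    psSubst p R' g - psSubst p R g
      - ∑ m, psSubst p R (pderiv (Fin.succ m) g) * (R' m - R m) ∈ I * I := by
  induction g using MvPolynomial.induction_on with
  | C a => simp [psSubst]
  | add g₁ g₂ h₁ h₂ =>
      have := Ideal.add_mem _ h₁ h₂
      convert this using 1
      simp only [psSubst_add, map_add, add_mul, Finset.sum_add_distrib]
      ring
  | mul_X g v ih =>
      have hXsum : ∑ m, psSubst p R (pderiv (Fin.succ m) (X v)) * (R' m - R m)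
          = psSubst p R' (X v) - psSubst p R (X v) := by
        cases v using Fin.cases with
        | zero =>
            have hz : ∀ m : Fin s,
                pderiv (Fin.succ m) (X (0 : Fin (s+1)) : MvPolynomial (Fin (s+1)) k) = 0 :=
              fun m => pderiv_X_of_ne (Fin.succ_ne_zero m).symm
            simp [hz, psSubst, psSubst_X]
        | succ m₀ =>
            rw [Finset.sum_eq_single m₀]
            · simp [pderiv_X_self, psSubst, psSubst_X]
            · intro m _ hm
              have hz : pderiv (Fin.succ m) (X (Fin.succ m₀) : MvPolynomial (Fin (s+1)) k) = 0 :=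
                pderiv_X_of_ne (by simpa [Fin.succ_inj] using (Ne.symm hm))
              simp [hz, psSubst]
            · intro hm; exact absurd (Finset.mem_univ m₀) hm
      set A := psSubst p R' g with hA
      set B := psSubst p R g with hB
      set u' := psSubst p R' (X v) with hu'
      set u := psSubst p R (X v) with hu
      set S := ∑ m, psSubst p R (pderiv (Fin.succ m) g) * (R' m - R m) with hS
      have hsum : ∑ m, psSubst p R (pderiv (Fin.succ m) (g * X v)) * (R' m - R m)
          = S * u + B * (u' - u) := by
        rw [← hXsum, hS, Finset.sum_mul, Finset.mul_sum, ← Finset.sum_add_distrib]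
        refine Finset.sum_congr rfl fun m _ => ?_
        rw [Derivation.leibniz]
        simp only [smul_eq_mul, psSubst_add, psSubst_mul, ← hB, ← hu]
        ring
      have hSI : S ∈ I := Ideal.sum_mem _ fun m _ => Ideal.mul_mem_left _ _ (h m)
      have hABI : A - B ∈ I := by
        have he : A - B = (A - B - S) + S := by ring
        rw [he]
        exact Ideal.add_mem _ (Ideal.mul_le_left (I := I) ih) hSI
      have hu'I : u' - u ∈ I := by
        cases v using Fin.cases with
        | zero => simp [hu', hu, psSubst_X]
        | succ m₀ => simpa [hu', hu, psSubst_X] using h m₀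
      have key : psSubst p R' (g * X v) - psSubst p R (g * X v)
          - ∑ m, psSubst p R (pderiv (Fin.succ m) (g * X v)) * (R' m - R m)
          = (A - B - S) * u + (A - B) * (u' - u) := by
        rw [hsum]
        simp only [psSubst_mul, ← hA, ← hB, ← hu', ← hu]
        ring
      rw [key]
      exact Ideal.add_mem _ (Ideal.mul_mem_right _ _ ih) (Ideal.mul_mem_mul hABI hu'I)

lemma cases_cc_eq [Field k] {s : ℕ} {p : k} {ξ : Fin s → k} {R : Fin s → PowerSeries k}
    (h : ∀ m, PowerSeries.constantCoeff (R m) = ξ m) :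
    (fun v : Fin (s + 1) => (Fin.cases p (fun m => PowerSeries.constantCoeff (R m)) v : k))
      = fun v : Fin (s + 1) => (Fin.cases p ξ v : k) := by
  funext v
  refine Fin.cases rfl (fun m => ?_) v
  simp [h m]

lemma cc_det_jac [Field k] {s : ℕ} (f : Fin s → MvPolynomial (Fin (s + 1)) k) (p : k)
    (ξ : Fin s → k) (R : Fin s → PowerSeries k)
    (h : ∀ m, PowerSeries.constantCoeff (R m) = ξ m) :
    PowerSeries.constantCoeff (psJac f p R).det =
      (Matrix.of fun i m : Fin s =>
        eval (fun v : Fin (s + 1) => Fin.cases p ξ v) (pderiv (Fin.succ m) (f i))).det := by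
  rw [RingHom.map_det]
  congr 1
  ext i m
  simp only [RingHom.mapMatrix_apply, Matrix.map_apply, psJac, Matrix.of_apply]
  rw [constantCoeff_psSubst, cases_cc_eq h]

lemma newton_invariant [Field k] {s : ℕ}
    (f : Fin s → MvPolynomial (Fin (s + 1)) k) (p : k) (ξ : Fin s → k)
    (hzero : ∀ i : Fin s, eval (fun v : Fin (s + 1) => Fin.cases p ξ v) (f i) = 0)
    (hjac : (Matrix.of fun i m : Fin s =>
      eval (fun v : Fin (s + 1) => Fin.cases p ξ v) (pderiv (Fin.succ m) (f i))).det ≠ 0) :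
    ∀ j : ℕ,
      (∀ m, PowerSeries.constantCoeff (newtonSeq f p ξ j m) = ξ m) ∧
      (∀ i : Fin s, psSubst p (newtonSeq f p ξ j) (f i) ∈
        Ideal.span {(PowerSeries.X : PowerSeries k) ^ 2 ^ j}) ∧
      (∀ m : Fin s, newtonSeq f p ξ (j + 1) m - newtonSeq f p ξ j m ∈
        Ideal.span {(PowerSeries.X : PowerSeries k) ^ 2 ^ j}) := by
  intro j
  induction j with
  | zero =>
      have hcc : ∀ m, PowerSeries.constantCoeff (newtonSeq f p ξ 0 m) = ξ m := by
        intro m; simp [newtonSeq]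
      have hF : ∀ i : Fin s, psSubst p (newtonSeq f p ξ 0) (f i) ∈
          Ideal.span {(PowerSeries.X : PowerSeries k) ^ 2 ^ 0} := by
        intro i
        rw [pow_zero, pow_one, Ideal.mem_span_singleton, PowerSeries.X_dvd_iff,
          constantCoeff_psSubst]
        rw [cases_cc_eq hcc]; exact hzero i
      refine ⟨hcc, hF, ?_⟩
      · -- step membership at level 0
        intro m
        have hD : IsUnit (psJac f p (newtonSeq f p ξ 0)).det := by
          rw [PowerSeries.isUnit_iff_constantCoeff, cc_det_jac f p ξ _ hcc]
          exact isUnit_iff_ne_zero.mpr hjac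
        have : newtonSeq f p ξ 1 m - newtonSeq f p ξ 0 m =
            -(Ring.inverse (psJac f p (newtonSeq f p ξ 0)).det *
              ((psJac f p (newtonSeq f p ξ 0)).adjugate.mulVec
                fun i => psSubst p (newtonSeq f p ξ 0) (f i)) m) := by
          show newtonStep f p (newtonSeq f p ξ 0) m - newtonSeq f p ξ 0 m = _
          rw [newtonStep]; ring
        rw [this]
        refine neg_mem (Ideal.mul_mem_left _ _ ?_)
        simp only [Matrix.mulVec, dotProduct]
        exact Ideal.sum_mem _ fun i _ => Ideal.mul_mem_left _ _ (hF i)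
  | succ j ih =>
      obtain ⟨ihcc, ihF, ihd⟩ := ih
      set R := newtonSeq f p ξ j with hR
      set R' := newtonSeq f p ξ (j + 1) with hR'
      set I := Ideal.span {(PowerSeries.X : PowerSeries k) ^ 2 ^ j} with hI
      have hII : I * I = Ideal.span {(PowerSeries.X : PowerSeries k) ^ 2 ^ (j + 1)} := by
        rw [hI, Ideal.span_singleton_mul_span_singleton, ← pow_add]
        congr 1
        rw [pow_succ, mul_two]
      have hD : IsUnit (psJac f p R).det := by
        rw [PowerSeries.isUnit_iff_constantCoeff, cc_det_jac f p ξ _ ihcc]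
        exact isUnit_iff_ne_zero.mpr hjac
      -- constant coefficients of R'
      have hccd : ∀ m, PowerSeries.constantCoeff (R' m - R m) = 0 := by
        intro m
        have hmem := ihd m
        rw [hI, Ideal.mem_span_singleton] at hmem
        have hXd : (PowerSeries.X : PowerSeries k) ∣ R' m - R m :=
          dvd_trans (dvd_pow_self PowerSeries.X (by positivity : (0:ℕ) < 2 ^ j).ne') hmem
        exact PowerSeries.X_dvd_iff.mp hXd
      have hcc' : ∀ m, PowerSeries.constantCoeff (R' m) = ξ m := by
        intro m
        have : PowerSeries.constantCoeff (R' m) =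
            PowerSeries.constantCoeff (R m) + PowerSeries.constantCoeff (R' m - R m) := by
          rw [← map_add]; congr 1; ring
        rw [this, hccd m, ihcc m, add_zero]
      -- f(R') ∈ (X^(2^(j+1)))
      have hF' : ∀ i : Fin s, psSubst p R' (f i) ∈
          Ideal.span {(PowerSeries.X : PowerSeries k) ^ 2 ^ (j + 1)} := by
        intro i
        have htay := psSubst_taylor p R R' I ihd (f i)
        rw [hII] at htay
        have hkey : psSubst p R (f i)
            + ∑ m, psSubst p R (pderiv (Fin.succ m) (f i)) * (R' m - R m) = 0 := by
          have hd : ∀ m, R' m - R m =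
              -(Ring.inverse (psJac f p R).det *
                ((psJac f p R).adjugate.mulVec fun i' => psSubst p R (f i')) m) := by
            intro m
            show newtonStep f p R m - R m = _
            rw [newtonStep]; ring
          have h2 : ∑ m, (psJac f p R) i m *
              ((psJac f p R).adjugate.mulVec fun i' => psSubst p R (f i')) m
              = (psJac f p R).det * psSubst p R (f i) := by
            have hmv : (psJac f p R).mulVec
                ((psJac f p R).adjugate.mulVec fun i' => psSubst p R (f i'))
                = fun i' => (psJac f p R).det * psSubst p R (f i') := by
              rw [Matrix.mulVec_mulVec, Matrix.mul_adjugate, Matrix.smul_mulVec,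
                Matrix.one_mulVec]
              funext i'
              simp [smul_eq_mul]
            have := congrFun hmv i
            simpa [Matrix.mulVec, dotProduct] using this
          have h3 : ∀ m, psSubst p R (pderiv (Fin.succ m) (f i)) = (psJac f p R) i m :=
            fun m => rfl
          calc psSubst p R (f i)
              + ∑ m, psSubst p R (pderiv (Fin.succ m) (f i)) * (R' m - R m)
              = psSubst p R (f i)
                + ∑ m, (psJac f p R) i m *
                  (-(Ring.inverse (psJac f p R).det *
                    ((psJac f p R).adjugate.mulVec fun i' => psSubst p R (f i')) m)) := by
                refine congrArg _ (Finset.sum_congr rfl fun m _ => ?_)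
                rw [h3 m, hd m]
            _ = psSubst p R (f i)
                - Ring.inverse (psJac f p R).det *
                  ∑ m, (psJac f p R) i m *
                    ((psJac f p R).adjugate.mulVec fun i' => psSubst p R (f i')) m := by
                rw [Finset.mul_sum]
                rw [sub_eq_add_neg, ← Finset.sum_neg_distrib]
                refine congrArg _ (Finset.sum_congr rfl fun m _ => ?_)
                ring
            _ = psSubst p R (f i) - Ring.inverse (psJac f p R).det *
                  ((psJac f p R).det * psSubst p R (f i)) := by rw [h2]
            _ = 0 := by rw [Ring.inverse_mul_cancel_left _ _ hD]; ring
        have : psSubst p R' (f i) =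
            (psSubst p R' (f i) - psSubst p R (f i)
              - ∑ m, psSubst p R (pderiv (Fin.succ m) (f i)) * (R' m - R m))
            + (psSubst p R (f i)
              + ∑ m, psSubst p R (pderiv (Fin.succ m) (f i)) * (R' m - R m)) := by ring
        rw [this, hkey, add_zero]
        exact htay
      refine ⟨hcc', hF', ?_⟩
      -- step membership at level j+1
      intro m
      have hD' : IsUnit (psJac f p R').det := by
        rw [PowerSeries.isUnit_iff_constantCoeff, cc_det_jac f p ξ _ hcc']
        exact isUnit_iff_ne_zero.mpr hjac
      have : newtonSeq f p ξ (j + 2) m - R' m =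
          -(Ring.inverse (psJac f p R').det *
            ((psJac f p R').adjugate.mulVec fun i => psSubst p R' (f i)) m) := by
        show newtonStep f p R' m - R' m = _
        rw [newtonStep]; ring
      rw [this]
      refine neg_mem (Ideal.mul_mem_left _ _ ?_)
      simp only [Matrix.mulVec, dotProduct]
      exact Ideal.sum_mem _ fun i _ => Ideal.mul_mem_left _ _ (hF' i)

/-- If `f(p, ξ) = 0` and the Jacobian determinant of `f` with respect to
`X₁,…,X_s` does not vanish at `(p, ξ)`, then the Newton–Hensel sequence is well defined (the
Jacobian determinant is a unit of `k⟦t⟧` at every step, so `Ring.inverse` produces its genuine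
inverse), `f_i(p+t, R⁽ʲ⁾) ∈ (t^{2ʲ})`, and `R⁽ʲ⁺¹⁾ ≡ R⁽ʲ⁾ mod (t^{2ʲ})`. -/
theorem statement11 [Field k] {s : ℕ} (hs : 1 ≤ s)
    (f : Fin s → MvPolynomial (Fin (s + 1)) k) (p : k) (ξ : Fin s → k)
    (hzero : ∀ i : Fin s, eval (fun v : Fin (s + 1) => Fin.cases p ξ v) (f i) = 0)
    (hjac : (Matrix.of fun i m : Fin s =>
      eval (fun v : Fin (s + 1) => Fin.cases p ξ v) (pderiv (Fin.succ m) (f i))).det ≠ 0) :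
    ∀ j : ℕ,
      (∀ i : Fin s, psSubst p (newtonSeq f p ξ j) (f i) ∈
        Ideal.span {(PowerSeries.X : PowerSeries k) ^ 2 ^ j}) ∧
      (PowerSeries.constantCoeff (psJac f p (newtonSeq f p ξ j)).det ≠ 0 ∧
        IsUnit (psJac f p (newtonSeq f p ξ j)).det) ∧
      (∀ m : Fin s, newtonSeq f p ξ (j + 1) m - newtonSeq f p ξ j m ∈
        Ideal.span {(PowerSeries.X : PowerSeries k) ^ 2 ^ j}) := by
  intro j
  obtain ⟨hcc, hF, hd⟩ := newton_invariant f p ξ hzero hjac j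
  have hccdet : PowerSeries.constantCoeff (psJac f p (newtonSeq f p ξ j)).det ≠ 0 := by
    rw [cc_det_jac f p ξ _ hcc]; exact hjac
  exact ⟨hF, ⟨hccdet, PowerSeries.isUnit_iff_constantCoeff.mpr
    (isUnit_iff_ne_zero.mpr hccdet)⟩, hd⟩
end
end

section
/- Let k be a field, s ≥ 1, f_1,…,f_s, g ∈ k[X_0,X_1,…,X_s], p ∈ k, δ ≥ 1, and j ≥ 0. Write A := k⟦t⟧ and say that an element of A[T] vanishes to precision c if all of its coefficients lie in the ideal (t^c) of A. Let J := (∂f_i/∂X_m)_{1≤i,m≤s} (derivatives with respect to X_1,…,X_s). Suppose M ∈ A[T] is monic of degree δ and V = (V_1,…,V_s) ∈ A[T]^s with deg V_m < δ for all m, satisfying: (i) V_1 − T vanishes to precision 2^j; (ii) for every 1 ≤ i ≤ s, the remainder of f_i(p+t, V) upon division by M vanishes to precision 2^j; (iii) the image of det J(p+t, V) is invertible in A[T]/(M). Then there exist M' ∈ A[T] monic of degree δ and V' = (V'_1,…,V'_s) ∈ A[T]^s with deg V'_m < δ such that M' − M and V'_m − V_m vanish to precision 2^j for all m, and: (i')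 V'_1 − T vanishes to precision 2^{j+1}; (ii') for every i, the remainder of f_i(p+t, V') upon division by M' vanishes to precision 2^{j+1}; (iii') the image of det J(p+t, V') is invertible in A[T]/(M'); moreover (iv') if the image of g(p+t, V) is invertible in A[T]/(M), then the image of g(p+t, V') is invertible in A[T]/(M'). -/
noncomputable section

open MvPolynomial

variable {k : Type*}

/-- Substitution `X₀ ↦ p + t` (a constant polynomial), `X_m ↦ V m` of a polynomial
`h ∈ k[X₀, X₁, …, X_s]` into the polynomial ring `k⟦t⟧[T]`. -/
def polySubst [Field k] {s : ℕ} (p : k) (V : Fin s → Polynomial (PowerSeries k))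
    (h : MvPolynomial (Fin (s + 1)) k) : Polynomial (PowerSeries k) :=
  aeval (fun v : Fin (s + 1) =>
    Fin.cases (Polynomial.C (PowerSeries.C p + PowerSeries.X)) V v) h

/-- A polynomial of `k⟦t⟧[T]` vanishes to precision `c` if all of its coefficients lie in the
ideal `(t^c)` of `k⟦t⟧`. -/
def toPrec [Field k] (c : ℕ) (P : Polynomial (PowerSeries k)) : Prop :=
  ∀ i : ℕ, P.coeff i ∈ Ideal.span {(PowerSeries.X : PowerSeries k) ^ c}

/-- The Jacobian determinant `det J(p+t, V)` in `k⟦t⟧[T]`. -/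
def polyJacDet [Field k] {s : ℕ} (f : Fin s → MvPolynomial (Fin (s + 1)) k) (p : k)
    (V : Fin s → Polynomial (PowerSeries k)) : Polynomial (PowerSeries k) :=
  Matrix.det (Matrix.of fun i m : Fin s => polySubst p V (pderiv (Fin.succ m) (f i)))

/-! ### Auxiliary lemmas -/

section Aux

variable [Field k]

theorem mapzeroAux (u : PowerSeries k) (P : Polynomial (PowerSeries k)) :
    Polynomial.C u ∣ P ↔ P.map (Ideal.Quotient.mk (Ideal.span {u})) = 0 := by
  rw [Polynomial.C_dvd_iff_dvd_coeff, Polynomial.ext_iff]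
  constructor
  · intro h i
    rw [Polynomial.coeff_map, Polynomial.coeff_zero, Ideal.Quotient.eq_zero_iff_mem,
      Ideal.mem_span_singleton]
    exact h i
  · intro h i
    have := h i
    rw [Polynomial.coeff_map, Polynomial.coeff_zero, Ideal.Quotient.eq_zero_iff_mem,
      Ideal.mem_span_singleton] at this
    exact this

theorem dvd_modByMonic' (u : PowerSeries k) {M : Polynomial (PowerSeries k)}
    (P : Polynomial (PowerSeries k)) (hM : M.Monic)
    (h : Polynomial.C u ∣ P) : Polynomial.C u ∣ P %ₘ M := by
  rw [mapzeroAux] at h ⊢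
  rw [Polynomial.map_modByMonic _ hM, h, Polynomial.zero_modByMonic]

theorem dvd_divByMonic' (u : PowerSeries k) {M : Polynomial (PowerSeries k)}
    (P : Polynomial (PowerSeries k)) (hM : M.Monic)
    (h : Polynomial.C u ∣ P) : Polynomial.C u ∣ P /ₘ M := by
  rw [mapzeroAux] at h ⊢
  rw [Polynomial.map_divByMonic _ hM, h, Polynomial.zero_divByMonic]

theorem taylorC {R : Type*} [CommRing R] (e : Polynomial R) (P : Polynomial R) :
    e ^ 2 ∣ P.comp (Polynomial.X - e) - P + Polynomial.derivative P * e := by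
  induction P using Polynomial.induction_on with
  | C a => simp
  | add P Q hP hQ =>
    obtain ⟨a, ha⟩ := hP; obtain ⟨b, hb⟩ := hQ
    refine ⟨a + b, ?_⟩
    rw [Polynomial.add_comp, Polynomial.derivative_add]
    linear_combination ha + hb
  | monomial n a hP =>
    obtain ⟨c, hc⟩ := hP
    refine ⟨Polynomial.derivative (Polynomial.C a * Polynomial.X ^ n)
      + c * (Polynomial.X - e), ?_⟩
    have hXσ : (Polynomial.X : Polynomial R).comp (Polynomial.X - e) = Polynomial.X - e :=
      Polynomial.X_comp
    have h1 : (Polynomial.C a * Polynomial.X ^ (n+1))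
        = (Polynomial.C a * Polynomial.X ^ n) * Polynomial.X := by ring
    rw [h1, Polynomial.mul_comp, hXσ, Polynomial.derivative_mul, Polynomial.derivative_X]
    have hc' : (Polynomial.C a * Polynomial.X ^ n).comp (Polynomial.X - e)
        = (Polynomial.C a * Polynomial.X ^ n)
          - Polynomial.derivative (Polynomial.C a * Polynomial.X ^ n) * e + e ^ 2 * c := by
      linear_combination hc
    rw [hc']
    ring

theorem taylorMv {s : ℕ} (p : k) (V w : Fin s → Polynomial (PowerSeries k))
    (τ : Polynomial (PowerSeries k)) (hw : ∀ m, τ ∣ w m)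
    (h : MvPolynomial (Fin (s + 1)) k) :
    τ ^ 2 ∣ polySubst p (fun m => V m + w m) h - polySubst p V h
      - ∑ m : Fin s, polySubst p V (pderiv (Fin.succ m) h) * w m := by
  set wext : Fin (s + 1) → Polynomial (PowerSeries k) := Fin.cases 0 w with hwext
  have hwe : ∀ v, τ ∣ wext v := by
    intro v
    induction v using Fin.cases with
    | zero => simp [hwext]
    | succ m => simpa [hwext] using hw m
  induction h using MvPolynomial.induction_on with
  | C a => simp [polySubst]
  | add P Q hP hQ =>
    have : polySubst p (fun m => V m + w m) (P + Q) - polySubst p V (P + Q)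
        - ∑ m : Fin s, polySubst p V (pderiv (Fin.succ m) (P + Q)) * w m
        = (polySubst p (fun m => V m + w m) P - polySubst p V P
            - ∑ m : Fin s, polySubst p V (pderiv (Fin.succ m) P) * w m)
          + (polySubst p (fun m => V m + w m) Q - polySubst p V Q
            - ∑ m : Fin s, polySubst p V (pderiv (Fin.succ m) Q) * w m) := by
      simp only [polySubst, map_add, add_mul, Finset.sum_add_distrib]
      ring
    rw [this]; exact dvd_add hP hQ
  | mul_X P v hP =>
    obtain ⟨c, hc⟩ := hP
    set Sv : MvPolynomial (Fin (s+1)) k → Polynomial (PowerSeries k) := polySubst p V with hSv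
    set Sw := polySubst p (fun m => V m + w m) with hSw
    have claim2 : Sw (X v) = Sv (X v) + wext v := by
      induction v using Fin.cases with
      | zero => simp [hSw, hSv, polySubst, hwext]
      | succ m => simp [hSw, hSv, polySubst, hwext]
    have claim1 : ∑ m : Fin s, Sv (pderiv (Fin.succ m) (X v)) * w m = wext v := by
      induction v using Fin.cases with
      | zero =>
        have : ∀ m : Fin s, pderiv (Fin.succ m) (X 0 : MvPolynomial (Fin (s+1)) k) = 0 :=
          fun m => pderiv_X_of_ne (Fin.succ_ne_zero m).symm
        simp [this, hSv, polySubst, hwext]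
      | succ m₀ =>
        rw [Finset.sum_eq_single m₀]
        · simp [hSv, polySubst, hwext]
        · intro b _ hb
          have : pderiv (Fin.succ b) (X (Fin.succ m₀) : MvPolynomial (Fin (s+1)) k) = 0 :=
            pderiv_X_of_ne (by simpa using (Ne.symm hb))
          simp [this, hSv, polySubst]
        · intro hh; exact absurd (Finset.mem_univ m₀) hh
    set L := ∑ m : Fin s, Sv (pderiv (Fin.succ m) P) * w m with hL
    have hτL : τ ∣ L := Finset.dvd_sum fun m _ => Dvd.dvd.mul_left (hw m) _
    have claim3 : ∑ m : Fin s, Sv (pderiv (Fin.succ m) (P * X v)) * w m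
        = L * Sv (X v) + Sv P * wext v := by
      rw [← claim1, hL, Finset.sum_mul, Finset.mul_sum, ← Finset.sum_add_distrib]
      refine Finset.sum_congr rfl fun m _ => ?_
      rw [pderiv_mul]
      simp only [hSv, polySubst, map_add, map_mul]
      ring
    have key : Sw (P * X v) - Sv (P * X v)
        - ∑ m : Fin s, Sv (pderiv (Fin.succ m) (P * X v)) * w m
        = L * wext v + τ^2 * (c * (Sv (X v) + wext v)) := by
      have mulw : Sw (P * X v) = Sw P * Sw (X v) := by simp [hSw, polySubst]
      have mulv : Sv (P * X v) = Sv P * Sv (X v) := by simp [hSv, polySubst]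
      have hSwP : Sw P = Sv P + L + τ^2 * c := by linear_combination hc
      rw [claim3, mulw, mulv, hSwP, claim2]; ring
    rw [key]
    have h1 : τ ^ 2 ∣ L * wext v := by rw [sq]; exact mul_dvd_mul hτL (hwe v)
    exact dvd_add h1 ⟨_, rfl⟩

theorem polySubst_sub_mem {s : ℕ} (p : k) (𝔍 : Ideal (Polynomial (PowerSeries k)))
    (U U' : Fin s → Polynomial (PowerSeries k)) (hU : ∀ m, U m - U' m ∈ 𝔍)
    (h : MvPolynomial (Fin (s + 1)) k) :
    polySubst p U h - polySubst p U' h ∈ 𝔍 := by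
  set φ := Ideal.Quotient.mkₐ k 𝔍 with hφ
  rw [← Ideal.Quotient.eq (I := 𝔍)]
  show φ _ = φ _
  rw [polySubst, polySubst, MvPolynomial.comp_aeval_apply (B := Polynomial (PowerSeries k) ⧸ 𝔍),
    MvPolynomial.comp_aeval_apply (B := Polynomial (PowerSeries k) ⧸ 𝔍)]
  have : (fun i : Fin (s+1) => φ (Fin.cases (Polynomial.C (PowerSeries.C p + PowerSeries.X)) U i))
      = fun i => φ (Fin.cases (Polynomial.C (PowerSeries.C p + PowerSeries.X)) U' i) := by
    funext v
    induction v using Fin.cases with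
    | zero => simp
    | succ m =>
      show φ (U m) = φ (U' m)
      simpa [hφ, Ideal.Quotient.mkₐ_eq_mk] using (Ideal.Quotient.eq (I := 𝔍)).mpr (hU m)
  rw [this]

theorem det_sub_dvd {s : ℕ} (τ : PowerSeries k)
    (J J' : Matrix (Fin s) (Fin s) (Polynomial (PowerSeries k)))
    (h : ∀ i m, Polynomial.C τ ∣ J i m - J' i m) :
    Polynomial.C τ ∣ J.det - J'.det := by
  set I : Ideal (Polynomial (PowerSeries k)) := Ideal.span {Polynomial.C τ}
  set φ := Ideal.Quotient.mk I
  rw [← Ideal.mem_span_singleton, ← Ideal.Quotient.eq (I := I)]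
  show φ _ = φ _
  rw [RingHom.map_det (S := Polynomial (PowerSeries k) ⧸ I) φ J,
    RingHom.map_det (S := Polynomial (PowerSeries k) ⧸ I) φ J']
  congr 1
  ext i m
  show φ (J i m) = φ (J' i m)
  exact (Ideal.Quotient.eq (I := I)).mpr (Ideal.mem_span_singleton.mpr (h i m))

theorem one_add_X_mul_unit {M' : Polynomial (PowerSeries k)} (hM' : M'.Monic)
    (hd : 0 < M'.natDegree) (z : AdjoinRoot M') :
    IsUnit (1 + AdjoinRoot.mk M' (Polynomial.C PowerSeries.X) * z) := by
  have hne : (Ideal.span {M'} : Ideal (Polynomial (PowerSeries k))) ≠ ⊤ := by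
    rw [Ne, Ideal.span_singleton_eq_top]
    intro hu
    have := Polynomial.natDegree_eq_zero_of_isUnit hu
    omega
  have hnt : Nontrivial (AdjoinRoot M') := Ideal.Quotient.nontrivial_iff.mpr hne
  have hfin : Module.Finite (PowerSeries k) (AdjoinRoot M') := (AdjoinRoot.powerBasis' hM').finite
  have hint : Algebra.IsIntegral (PowerSeries k) (AdjoinRoot M') :=
    Algebra.IsIntegral.of_finite _ _
  by_contra hnu
  obtain ⟨𝔪, h𝔪max, h𝔪⟩ := exists_max_ideal_of_mem_nonunits hnu
  have hcomap : (Ideal.comap (algebraMap (PowerSeries k) (AdjoinRoot M')) 𝔪).IsMaximal :=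
    Ideal.isMaximal_comap_of_isIntegral_of_isMaximal (R := PowerSeries k) 𝔪
  have hXmem : (PowerSeries.X : PowerSeries k) ∈
      Ideal.comap (algebraMap (PowerSeries k) (AdjoinRoot M')) 𝔪 := by
    rw [IsLocalRing.eq_maximalIdeal hcomap]
    show ¬ IsUnit (PowerSeries.X : PowerSeries k)
    rw [PowerSeries.isUnit_iff_constantCoeff]
    simp
  have hCX : AdjoinRoot.mk M' (Polynomial.C PowerSeries.X) ∈ 𝔪 := by
    have h2 : algebraMap (PowerSeries k) (AdjoinRoot M') PowerSeries.X ∈ 𝔪 := hXmem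
    rwa [AdjoinRoot.algebraMap_eq] at h2
  have h1 : (1 : AdjoinRoot M') ∈ 𝔪 := by
    have h3 := Ideal.sub_mem 𝔪 h𝔪 (Ideal.mul_mem_right z 𝔪 hCX)
    simpa using h3
  exact h𝔪max.ne_top (Ideal.eq_top_of_isUnit_mem 𝔪 h1 isUnit_one)

theorem unit_transfer {c : ℕ} (hc : c ≠ 0) {M M' x x' : Polynomial (PowerSeries k)}
    (hM' : M'.Monic) (hd : 0 < M'.natDegree)
    (hx : IsUnit (Ideal.Quotient.mk (Ideal.span {M}) x))
    (hMM' : Polynomial.C ((PowerSeries.X : PowerSeries k) ^ c) ∣ M - M')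
    (hxx' : Polynomial.C ((PowerSeries.X : PowerSeries k) ^ c) ∣ x' - x) :
    IsUnit (Ideal.Quotient.mk (Ideal.span {M'}) x') := by
  obtain ⟨y, hy⟩ : ∃ y, Ideal.Quotient.mk (Ideal.span {M}) x *
      Ideal.Quotient.mk (Ideal.span {M}) y = 1 := by
    obtain ⟨y, hy⟩ := Ideal.Quotient.mk_surjective (I := Ideal.span {M}) ↑hx.unit⁻¹
    exact ⟨y, by rw [hy]; exact hx.mul_val_inv⟩
  have hmem : x * y - 1 ∈ Ideal.span {M} := by
    rw [← Ideal.Quotient.eq_zero_iff_mem, map_sub, map_mul, map_one, hy, sub_self]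
  obtain ⟨α, hα⟩ := Ideal.mem_span_singleton.mp hmem
  have hXdvd : (Polynomial.C (PowerSeries.X : PowerSeries k)) ∣
      (Polynomial.C ((PowerSeries.X : PowerSeries k) ^ c)) :=
    map_dvd Polynomial.C (dvd_pow_self _ hc)
  obtain ⟨z, hz⟩ : (Polynomial.C (PowerSeries.X : PowerSeries k)) ∣
      (M - M') * α + (x' - x) * y :=
    dvd_add ((hXdvd.trans hMM').mul_right α) ((hXdvd.trans hxx').mul_right y)
  have key : x' * y = M' * α + (1 + Polynomial.C (PowerSeries.X : PowerSeries k) * z) := by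
    have : x' * y = (x * y - 1) + 1 + ((M - M') * α + (x' - x) * y) - (M - M') * α := by ring
    rw [this, hα, hz]; ring
  show IsUnit (AdjoinRoot.mk M' x')
  have h2 : AdjoinRoot.mk M' x' * AdjoinRoot.mk M' y
      = 1 + AdjoinRoot.mk M' (Polynomial.C PowerSeries.X) * AdjoinRoot.mk M' z := by
    rw [← map_mul, key, map_add, map_mul, AdjoinRoot.mk_self, zero_mul, zero_add,
      map_add, map_one, map_mul]
  exact isUnit_of_mul_isUnit_left (by rw [h2]; exact one_add_X_mul_unit hM' hd _)

theorem polySubst_comp {s : ℕ} (p : k) (σ : Polynomial (PowerSeries k))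
    (W : Fin s → Polynomial (PowerSeries k)) (h : MvPolynomial (Fin (s + 1)) k) :
    polySubst p (fun m => (W m).comp σ) h = (polySubst p W h).comp σ := by
  set ψ : Polynomial (PowerSeries k) →ₐ[k] Polynomial (PowerSeries k) :=
    (Polynomial.aeval σ : Polynomial (PowerSeries k) →ₐ[PowerSeries k] _).restrictScalars k
    with hψ
  have hψ' : ∀ q : Polynomial (PowerSeries k), ψ q = q.comp σ := fun q =>
    (Polynomial.comp_eq_aeval).symm
  rw [polySubst, polySubst, ← hψ' _, MvPolynomial.comp_aeval_apply]
  have : (fun i : Fin (s+1) =>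
        ψ (Fin.cases (Polynomial.C (PowerSeries.C p + PowerSeries.X)) W i))
      = fun v => Fin.cases (Polynomial.C (PowerSeries.C p + PowerSeries.X))
          (fun m => (W m).comp σ) v := by
    funext v
    induction v using Fin.cases with
    | zero =>
      rw [hψ' _]
      simp only [Fin.cases_zero]
      exact Polynomial.C_comp
    | succ m =>
      rw [hψ' _]
      simp only [Fin.cases_succ]
  rw [this]

theorem toPrec_iff' (c : ℕ) (P : Polynomial (PowerSeries k)) :
    toPrec c P ↔ Polynomial.C ((PowerSeries.X : PowerSeries k) ^ c) ∣ P := by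
  rw [Polynomial.C_dvd_iff_dvd_coeff]
  unfold toPrec
  simp_rw [Ideal.mem_span_singleton]

end Aux

set_option maxHeartbeats 2000000 in
/-- one step of the Newton–Hensel lifting, Proposition
`prop: main loop Newton lifting` of the paper. -/
theorem statement14 [Field k] {s : ℕ} (hs : 1 ≤ s)
    (f : Fin s → MvPolynomial (Fin (s + 1)) k) (g : MvPolynomial (Fin (s + 1)) k)
    (p : k) (δ : ℕ) (hδ : 1 ≤ δ) (j : ℕ)
    (M : Polynomial (PowerSeries k)) (hM : M.Monic) (hMdeg : M.natDegree = δ)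
    (V : Fin s → Polynomial (PowerSeries k)) (hVdeg : ∀ m : Fin s, (V m).natDegree < δ)
    -- (i) `V₁ - T` vanishes to precision `2ʲ`
    (hV1 : toPrec (2 ^ j) (V ⟨0, hs⟩ - Polynomial.X))
    -- (ii) the remainder of `f_i(p+t, V)` upon division by `M` vanishes to precision `2ʲ`
    (hfi : ∀ i : Fin s, toPrec (2 ^ j) (polySubst p V (f i) %ₘ M))
    -- (iii) `det J(p+t, V)` is invertible modulo `M`
    (hdet : IsUnit (Ideal.Quotient.mk (Ideal.span {M}) (polyJacDet f p V))) :
    ∃ (M' : Polynomial (PowerSeries k)) (V' : Fin s → Polynomial (PowerSeries k)),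
      M'.Monic ∧ M'.natDegree = δ ∧ (∀ m : Fin s, (V' m).natDegree < δ) ∧
      toPrec (2 ^ j) (M' - M) ∧ (∀ m : Fin s, toPrec (2 ^ j) (V' m - V m)) ∧
      -- (i')
      toPrec (2 ^ (j + 1)) (V' ⟨0, hs⟩ - Polynomial.X) ∧
      -- (ii')
      (∀ i : Fin s, toPrec (2 ^ (j + 1)) (polySubst p V' (f i) %ₘ M')) ∧
      -- (iii')
      IsUnit (Ideal.Quotient.mk (Ideal.span {M'}) (polyJacDet f p V')) ∧
      -- (iv')
      (IsUnit (Ideal.Quotient.mk (Ideal.span {M}) (polySubst p V g)) →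
        IsUnit (Ideal.Quotient.mk (Ideal.span {M'}) (polySubst p V' g))) := by
  classical
  set τ : Polynomial (PowerSeries k) :=
    Polynomial.C ((PowerSeries.X : PowerSeries k) ^ (2 ^ j)) with hτ
  have hXc : (2 : ℕ) ^ j ≠ 0 := pow_ne_zero _ two_ne_zero
  have hττ : τ ^ 2 = Polynomial.C ((PowerSeries.X : PowerSeries k) ^ (2 ^ (j + 1))) := by
    rw [hτ, ← map_pow, ← pow_mul, ← pow_succ]
  -- degree helpers
  have degLT : ∀ q : Polynomial (PowerSeries k), q.natDegree < δ →
      q.degree < (δ : WithBot ℕ) := fun q hq =>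
    lt_of_le_of_lt Polynomial.degree_le_natDegree (by exact_mod_cast hq)
  have natLT : ∀ q : Polynomial (PowerSeries k), q.degree < (δ : WithBot ℕ) →
      q.natDegree < δ := by
    intro q hq
    by_cases h0 : q = 0
    · simp only [h0, Polynomial.natDegree_zero]; omega
    · exact (Polynomial.natDegree_lt_iff_degree_lt h0).mpr hq
  -- δ ≥ 2
  have hδ2 : 2 ≤ δ := by
    by_contra hcon
    have hδ1 : δ = 1 := by omega
    have h10 := hV1 1
    have hcoeff : (V ⟨0, hs⟩).coeff 1 = 0 :=
      Polynomial.coeff_eq_zero_of_natDegree_lt (by rw [← hδ1] at *; exact hVdeg ⟨0, hs⟩)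
    rw [Polynomial.coeff_sub, hcoeff, Polynomial.coeff_X_one, zero_sub,
      Ideal.mem_span_singleton] at h10
    have hXu : IsUnit ((PowerSeries.X : PowerSeries k) ^ (2 ^ j)) :=
      isUnit_of_dvd_unit h10 (IsUnit.neg isUnit_one)
    have hXunit : IsUnit (PowerSeries.X : PowerSeries k) :=
      isUnit_of_dvd_unit (dvd_pow_self _ hXc) hXu
    rw [PowerSeries.isUnit_iff_constantCoeff] at hXunit
    simp at hXunit
  have hMne : M ≠ 0 := hM.ne_zero
  have hMdegree : M.degree = (δ : WithBot ℕ) := by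
    rw [Polynomial.degree_eq_natDegree hMne, hMdeg]
  have hV1' : τ ∣ V ⟨0, hs⟩ - Polynomial.X := (toPrec_iff' _ _).mp hV1
  -- inverse of the Jacobian determinant mod M
  obtain ⟨y, hy⟩ : ∃ y, Ideal.Quotient.mk (Ideal.span {M}) (polyJacDet f p V) *
      Ideal.Quotient.mk (Ideal.span {M}) y = 1 := by
    obtain ⟨y, hy⟩ := Ideal.Quotient.mk_surjective (I := Ideal.span {M}) ↑hdet.unit⁻¹
    exact ⟨y, by rw [hy]; exact hdet.mul_val_inv⟩
  obtain ⟨α0, hα0⟩ : ∃ α0, polyJacDet f p V * y - 1 = M * α0 := by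
    have hmem : polyJacDet f p V * y - 1 ∈ Ideal.span {M} := by
      rw [← Ideal.Quotient.eq_zero_iff_mem, map_sub, map_mul, map_one, hy, sub_self]
    exact Ideal.mem_span_singleton.mp hmem
  set Jm : Matrix (Fin s) (Fin s) (Polynomial (PowerSeries k)) :=
    Matrix.of (fun i m : Fin s => polySubst p V (pderiv (Fin.succ m) (f i))) with hJm
  have hJdet : Jm.det = polyJacDet f p V := rfl
  set R : Fin s → Polynomial (PowerSeries k) := fun i => polySubst p V (f i) %ₘ M with hR
  have hRi : ∀ i, R i = polySubst p V (f i) %ₘ M := fun i => rfl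
  have hτR : ∀ i, τ ∣ R i := fun i => (toPrec_iff' _ _).mp (hfi i)
  set S : Fin s → Polynomial (PowerSeries k) :=
    fun m => ∑ i : Fin s, Jm.adjugate m i * (y * R i) with hS
  set u : Fin s → Polynomial (PowerSeries k) := fun m => S m %ₘ M with humm
  have hτu : ∀ m, τ ∣ u m := fun m =>
    dvd_modByMonic' _ _ hM (Finset.dvd_sum fun i _ => ((hτR i).mul_left y).mul_left _)
  have hudeg : ∀ m, (u m).degree < (δ : WithBot ℕ) := fun m =>
    hMdegree ▸ Polynomial.degree_modByMonic_lt _ hM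
  have hNewton : ∀ i, ∃ β, (∑ m : Fin s, Jm i m * u m) - R i = M * β := by
    intro i
    have hum : ∀ m, u m = S m - M * (S m /ₘ M) := fun m =>
      eq_sub_of_add_eq (Polynomial.modByMonic_add_div (S m) M)
    have hsum1 : ∑ m : Fin s, Jm i m * S m
        = ∑ i' : Fin s, ((Jm * Jm.adjugate) i i') * (y * R i') := by
      simp only [hS, Matrix.mul_apply, Finset.mul_sum, Finset.sum_mul]
      rw [Finset.sum_comm]
      exact Finset.sum_congr rfl fun m _ => Finset.sum_congr rfl fun i' _ => by ring
    have hsum2 : ∑ i' : Fin s, ((Jm * Jm.adjugate) i i') * (y * R i')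
        = Jm.det * (y * R i) := by
      rw [Matrix.mul_adjugate]
      rw [Finset.sum_eq_single i]
      · simp
      · intro b _ hb
        simp [Matrix.one_apply, (Ne.symm hb)]
      · intro hh; exact absurd (Finset.mem_univ i) hh
    refine ⟨α0 * R i - ∑ m : Fin s, Jm i m * (S m /ₘ M), ?_⟩
    have hstep : ∑ m : Fin s, Jm i m * u m
        = (∑ m : Fin s, Jm i m * S m) - M * ∑ m : Fin s, Jm i m * (S m /ₘ M) := by
      rw [Finset.mul_sum, ← Finset.sum_sub_distrib]
      exact Finset.sum_congr rfl fun m _ => by rw [hum m]; ring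
    rw [hstep, hsum1, hsum2, hJdet]
    linear_combination (R i) * hα0
  -- the Newton update W
  set W : Fin s → Polynomial (PowerSeries k) := fun m => V m - u m with hW
  have hWdeg : ∀ m, (W m).degree < (δ : WithBot ℕ) := fun m =>
    lt_of_le_of_lt (Polynomial.degree_sub_le _ _) (max_lt (degLT _ (hVdeg m)) (hudeg m))
  have hτWV : ∀ m, τ ∣ W m - V m := fun m => by
    have : W m - V m = -(u m) := by rw [hW]; ring
    rw [this]; exact (hτu m).neg_right
  have hFW : ∀ i, ∃ a b, polySubst p W (f i) = M * a + τ ^ 2 * b := by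
    intro i
    obtain ⟨b0, hb0⟩ := taylorMv p V (fun m => -(u m)) τ (fun m => (hτu m).neg_right) (f i)
    obtain ⟨β, hβ⟩ := hNewton i
    have hdiv := Polynomial.modByMonic_add_div (polySubst p V (f i)) M
    have hVW : (fun m => V m + -(u m)) = W := funext fun m => (sub_eq_add_neg _ _).symm
    rw [hVW] at hb0
    have hneg : ∑ m : Fin s, polySubst p V (pderiv (Fin.succ m) (f i)) * (-(u m))
        = -∑ m : Fin s, Jm i m * u m := by
      rw [← Finset.sum_neg_distrib]
      exact Finset.sum_congr rfl fun m _ => by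
        rw [show Jm i m = polySubst p V (pderiv (Fin.succ m) (f i)) from rfl]; ring
    rw [hneg] at hb0
    refine ⟨polySubst p V (f i) /ₘ M - β, b0, ?_⟩
    rw [hRi] at hβ
    linear_combination hb0 - hβ - hdiv
  -- the correction e and the new modulus M'
  set e : Polynomial (PowerSeries k) := W ⟨0, hs⟩ - Polynomial.X with he
  have hτe : τ ∣ e := by
    have : e = (V ⟨0, hs⟩ - Polynomial.X) - u ⟨0, hs⟩ := by rw [he, hW]; ring
    rw [this]; exact dvd_sub hV1' (hτu _)
  have hedeg : e.degree < (δ : WithBot ℕ) := by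
    refine lt_of_le_of_lt (Polynomial.degree_sub_le _ _) (max_lt (hWdeg _) ?_)
    rw [Polynomial.degree_X]
    exact_mod_cast hδ2
  set Md : Polynomial (PowerSeries k) := Polynomial.derivative M with hMdd
  set r0 : Polynomial (PowerSeries k) := (Md * e) %ₘ M with hr0
  have hτr0 : τ ∣ r0 := dvd_modByMonic' _ _ hM (hτe.mul_left Md)
  have hr0deg : r0.degree < M.degree := Polynomial.degree_modByMonic_lt _ hM
  set M' : Polynomial (PowerSeries k) := M - r0 with hM'def
  have hM'monic : M'.Monic := by
    rw [hM'def, sub_eq_add_neg]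
    exact hM.add_of_left (by rwa [Polynomial.degree_neg])
  have hM'degree : M'.degree = (δ : WithBot ℕ) := by
    rw [hM'def, sub_eq_add_neg,
      Polynomial.degree_add_eq_left_of_degree_lt (by rwa [Polynomial.degree_neg]), hMdegree]
  have hM'deg : M'.natDegree = δ := Polynomial.natDegree_eq_of_degree_eq_some hM'degree
  have hM'pos : 0 < M'.natDegree := by omega
  have hτMM' : τ ∣ M - M' := by rw [hM'def]; simpa using hτr0
  -- step A : M ∘ σ ∈ (M') + (τ²)
  obtain ⟨c1, hc1⟩ := taylorC e M
  obtain ⟨e1, he1⟩ := id hτe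
  set Q0 : Polynomial (PowerSeries k) := (Md * e) /ₘ M with hQ0
  obtain ⟨q1, hq1⟩ : τ ∣ Q0 := dvd_divByMonic' _ _ hM (hτe.mul_left Md)
  obtain ⟨rr1, hrr1⟩ := id hτr0
  have hdiv0 : r0 + M * Q0 = Md * e := Polynomial.modByMonic_add_div _ M
  have hMσ : M.comp (Polynomial.X - e)
      = M' * (1 - Q0) + τ ^ 2 * (e1 ^ 2 * c1 - rr1 * q1) := by
    rw [hM'def]
    linear_combination hc1 + hdiv0 + ((e + τ * e1) * c1) * he1 - Q0 * hrr1 - (τ * rr1) * hq1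
  -- the new tuple V'
  set V' : Fin s → Polynomial (PowerSeries k) :=
    fun m => W m - (Polynomial.derivative (W m) * e) %ₘ M' with hV'def
  have hV'deg : ∀ m, (V' m).natDegree < δ := by
    intro m
    apply natLT
    refine lt_of_le_of_lt (Polynomial.degree_sub_le _ _) (max_lt (hWdeg m) ?_)
    rw [← hM'degree]
    exact Polynomial.degree_modByMonic_lt _ hM'monic
  have hτV'V : ∀ m, τ ∣ V' m - V m := by
    intro m
    have : V' m - V m = (W m - V m) - (Polynomial.derivative (W m) * e) %ₘ M' := by
      rw [hV'def]; ring
    rw [this]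
    exact dvd_sub (hτWV m) (dvd_modByMonic' _ _ hM'monic (hτe.mul_left _))
  -- (i')
  have hi' : toPrec (2 ^ (j + 1)) (V' ⟨0, hs⟩ - Polynomial.X) := by
    rw [toPrec_iff', ← hττ]
    have hW1 : W ⟨0, hs⟩ = Polynomial.X + e := by rw [he]; ring
    have hder : Polynomial.derivative (W ⟨0, hs⟩) = 1 + Polynomial.derivative e := by
      rw [hW1, Polynomial.derivative_add, Polynomial.derivative_X]
    have hτde : τ ∣ Polynomial.derivative e :=
      ⟨Polynomial.derivative e1, by rw [he1, hτ, Polynomial.derivative_C_mul]⟩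
    have hemod : e %ₘ M' = e :=
      (Polynomial.modByMonic_eq_self_iff hM'monic).mpr (by rw [hM'degree]; exact hedeg)
    have key1 : (Polynomial.derivative (W ⟨0, hs⟩) * e) %ₘ M'
        = e + (Polynomial.derivative e * e) %ₘ M' := by
      rw [hder, add_mul, one_mul, Polynomial.add_modByMonic, hemod]
    have hτ2d : τ ^ 2 ∣ (Polynomial.derivative e * e) %ₘ M' := by
      rw [hττ]
      refine dvd_modByMonic' _ _ hM'monic ?_
      rw [← hττ, sq]
      exact mul_dvd_mul hτde hτe
    have : V' ⟨0, hs⟩ - Polynomial.X = -((Polynomial.derivative e * e) %ₘ M') := by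
      have hV'1 : V' ⟨0, hs⟩
          = W ⟨0, hs⟩ - (Polynomial.derivative (W ⟨0, hs⟩) * e) %ₘ M' := rfl
      rw [hV'1, key1, hW1]
      ring
    rw [this]
    exact hτ2d.neg_right
  -- (ii')
  have hii' : ∀ i : Fin s, toPrec (2 ^ (j + 1)) (polySubst p V' (f i) %ₘ M') := by
    intro i
    rw [toPrec_iff', ← hττ]
    obtain ⟨ai, bi, hab⟩ := hFW i
    have hτcomp : (τ : Polynomial (PowerSeries k)).comp (Polynomial.X - e) = τ := by
      rw [hτ]; exact Polynomial.C_comp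
    have hFσ : (polySubst p W (f i)).comp (Polynomial.X - e)
        = M' * ((1 - Q0) * (ai.comp (Polynomial.X - e)))
          + τ ^ 2 * ((e1 ^ 2 * c1 - rr1 * q1) * (ai.comp (Polynomial.X - e))
            + bi.comp (Polynomial.X - e)) := by
      rw [hab, Polynomial.add_comp, Polynomial.mul_comp, Polynomial.mul_comp,
        Polynomial.pow_comp, hτcomp, hMσ]
      ring
    set 𝔍 : Ideal (Polynomial (PowerSeries k)) := Ideal.span {M', τ ^ 2} with h𝔍
    have hmemJ : ∀ x : Polynomial (PowerSeries k),
        (∃ a b, x = M' * a + τ ^ 2 * b) → x ∈ 𝔍 := by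
      rintro x ⟨a, b, hx⟩
      rw [h𝔍, Ideal.mem_span_pair]
      exact ⟨a, b, by rw [hx]; ring⟩
    have htup : ∀ m, V' m - (W m).comp (Polynomial.X - e) ∈ 𝔍 := by
      intro m
      obtain ⟨cm, hcm⟩ := taylorC e (W m)
      apply hmemJ
      refine ⟨(Polynomial.derivative (W m) * e) /ₘ M', -(e1 ^ 2 * cm), ?_⟩
      have hdm : (Polynomial.derivative (W m) * e) %ₘ M'
          + M' * ((Polynomial.derivative (W m) * e) /ₘ M')
          = Polynomial.derivative (W m) * e := Polynomial.modByMonic_add_div _ M'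
      have hV'm : V' m = W m - (Polynomial.derivative (W m) * e) %ₘ M' := rfl
      rw [hV'm]
      linear_combination -hcm - hdm - ((e + τ * e1) * cm) * he1
    have hsub := polySubst_sub_mem p 𝔍 V' (fun m => (W m).comp (Polynomial.X - e)) htup (f i)
    have hcompeq := polySubst_comp p (Polynomial.X - e) W (f i)
    have hFmem : polySubst p V' (f i) ∈ 𝔍 := by
      have h2 : polySubst p (fun m => (W m).comp (Polynomial.X - e)) (f i) ∈ 𝔍 := by
        rw [hcompeq]
        exact hmemJ _ ⟨_, _, hFσ⟩
      have h3 := Ideal.add_mem 𝔍 hsub h2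
      simpa using h3
    obtain ⟨aa, bb, habb⟩ := Ideal.mem_span_pair.mp hFmem
    have hmodeq : polySubst p V' (f i) %ₘ M' = (bb * τ ^ 2) %ₘ M' := by
      rw [← habb, Polynomial.add_modByMonic,
        (Polynomial.modByMonic_eq_zero_iff_dvd hM'monic).mpr ⟨aa, (mul_comm _ _)⟩, zero_add]
    rw [hmodeq, hττ]
    exact dvd_modByMonic' _ _ hM'monic (by rw [← hττ]; exact Dvd.dvd.mul_left dvd_rfl bb)
  -- (iii')
  have hiii' : IsUnit (Ideal.Quotient.mk (Ideal.span {M'}) (polyJacDet f p V')) := by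
    have hJentry : ∀ i m : Fin s, Polynomial.C ((PowerSeries.X : PowerSeries k) ^ (2 ^ j)) ∣
        (Matrix.of fun i m : Fin s => polySubst p V' (pderiv (Fin.succ m) (f i))) i m
          - Jm i m := by
      intro i m
      rw [← hτ]
      have := polySubst_sub_mem p (Ideal.span {τ}) V' V
        (fun m' => Ideal.mem_span_singleton.mpr (hτV'V m')) (pderiv (Fin.succ m) (f i))
      rw [Ideal.mem_span_singleton] at this
      exact this
    have hdet' : Polynomial.C ((PowerSeries.X : PowerSeries k) ^ (2 ^ j)) ∣
        polyJacDet f p V' - polyJacDet f p V :=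
      det_sub_dvd _ _ _ hJentry
    exact unit_transfer hXc hM'monic hM'pos hdet (by rw [← hτ]; exact hτMM') hdet'
  -- (iv')
  have hiv' : IsUnit (Ideal.Quotient.mk (Ideal.span {M}) (polySubst p V g)) →
      IsUnit (Ideal.Quotient.mk (Ideal.span {M'}) (polySubst p V' g)) := by
    intro hg
    have hgg : Polynomial.C ((PowerSeries.X : PowerSeries k) ^ (2 ^ j)) ∣
        polySubst p V' g - polySubst p V g := by
      rw [← hτ]
      have := polySubst_sub_mem p (Ideal.span {τ}) V' V
        (fun m' => Ideal.mem_span_singleton.mpr (hτV'V m')) g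
      rwa [Ideal.mem_span_singleton] at this
    exact unit_transfer hXc hM'monic hM'pos hg (by rw [← hτ]; exact hτMM') hgg
  refine ⟨M', V', hM'monic, hM'deg, hV'deg, ?_, ?_, hi', hii', hiii', hiv'⟩
  · rw [toPrec_iff', ← hτ]
    have : M' - M = -r0 := by rw [hM'def]; ring
    rw [this]; exact hτr0.neg_right
  · intro m
    rw [toPrec_iff', ← hτ]
    exact hτV'V m
end
end

section
/- Let k be an algebraically closed field, m ≥ 1, and I ⊆ k[X_0,X_1,…,X_m] a radical ideal with zero set C := {x ∈ k^{m+1} : f(x)=0 for all f ∈ I} such that I is the vanishing ideal of C. Suppose that A := k[X_0,…,X_m]/I, viewed as a module over k[X_0] via the map sending X_0 to its class, is finitely generated and free. Let F ∈ k[X_0,…,X_m] be such that C ∩ {x : F(x)=0} is finite, let χ ∈ k[X_0][T] be the characteristic polynomial of the k[X_0]-linear endomorphism of A given by multiplication by the class of F, and let ã ∈ k[X_0] be its constant term. Then: (1) ã ≠ 0; (2) ã ∈ I + (F) (the ideal of k[X_0,…,X_m] generated by I and F); in particular, ã(x_0) = 0 for every point (x_0,x_1,…,x_m) ∈ C with F(x_0,…,x_m)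 = 0. -/
noncomputable section

open MvPolynomial

variable {k : Type*}

set_option maxHeartbeats 4000000 in
set_option synthInstance.maxHeartbeats 200000 in
theorem statement16_aux [Field k] [IsAlgClosed k] {m : ℕ}
    (I : Ideal (MvPolynomial (Fin (m + 1)) k))
    (hvan : I = MvPolynomial.vanishingIdeal k (MvPolynomial.zeroLocus k I))
    (F : MvPolynomial (Fin (m + 1)) k)
    (hfin : (MvPolynomial.zeroLocus k I ∩ {x | eval x F = 0}).Finite)
    [alg : Algebra (Polynomial k) (MvPolynomial (Fin (m + 1)) k ⧸ I)]
    (halg : algebraMap (Polynomial k) (MvPolynomial (Fin (m + 1)) k ⧸ I) =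
      ((Polynomial.aeval (Ideal.Quotient.mk I (MvPolynomial.X (0 : Fin (m + 1)))) :
        Polynomial k →ₐ[k] MvPolynomial (Fin (m + 1)) k ⧸ I).toRingHom))
    [hfg : Module.Finite (Polynomial k) (MvPolynomial (Fin (m + 1)) k ⧸ I)]
    [hfree : Module.Free (Polynomial k) (MvPolynomial (Fin (m + 1)) k ⧸ I)] :
    (((LinearMap.mulLeft (Polynomial k) (Ideal.Quotient.mk I F)).charpoly.coeff 0 ≠ 0) ∧
      (Polynomial.aeval (MvPolynomial.X (0 : Fin (m + 1)) :
          MvPolynomial (Fin (m + 1)) k)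
        ((LinearMap.mulLeft (Polynomial k) (Ideal.Quotient.mk I F)).charpoly.coeff 0)
          ∈ I ⊔ Ideal.span {F}) ∧
      (∀ x ∈ MvPolynomial.zeroLocus k I, eval x F = 0 →
        Polynomial.eval (x 0) ((LinearMap.mulLeft (Polynomial k)
          (Ideal.Quotient.mk I F)).charpoly.coeff 0) = 0)) := by
  classical
  set f := LinearMap.mulLeft (Polynomial k) (Ideal.Quotient.mk I F) with hf
  clear_value f
  set a := f.charpoly.coeff 0 with ha
  clear_value a
  have halgmap : ∀ p : Polynomial k,
      algebraMap (Polynomial k) (MvPolynomial (Fin (m + 1)) k ⧸ I) p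
        = Ideal.Quotient.mk I (Polynomial.aeval (MvPolynomial.X 0) p) := by
    intro p
    rw [RingHom.congr_fun halg p]
    show Polynomial.aeval (Ideal.Quotient.mk I (MvPolynomial.X 0)) p = _
    exact Polynomial.aeval_algHom_apply (Ideal.Quotient.mkₐ k I) _ p
  -- Cayley-Hamilton
  have hCH : Polynomial.aeval (Ideal.Quotient.mk I F) f.charpoly = 0 := by
    have h1 : Polynomial.aeval f f.charpoly = 0 := LinearMap.aeval_self_charpoly f
    have h2 : f = Algebra.lmul (Polynomial k) (MvPolynomial (Fin (m + 1)) k ⧸ I)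
        (Ideal.Quotient.mk I F) := by
      rw [hf]
      ext x
      simp [Algebra.coe_lmul_eq_mul]
    nth_rewrite 1 [h2] at h1
    rw [Polynomial.aeval_algHom_apply] at h1
    have h3 := LinearMap.congr_fun h1 1
    simpa [Algebra.coe_lmul_eq_mul] using h3
  -- membership
  have hmem : Polynomial.aeval (MvPolynomial.X (0 : Fin (m + 1)) :
      MvPolynomial (Fin (m + 1)) k) a ∈ I ⊔ Ideal.span {F} := by
    obtain ⟨s, hs⟩ := Ideal.Quotient.mk_surjective
      (-(Polynomial.aeval (Ideal.Quotient.mk I F) f.charpoly.divX))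
    have hdecomp : Ideal.Quotient.mk I (Polynomial.aeval (MvPolynomial.X 0) a - s * F) ∈
        ({0} : Set _) := by
      have h3 : Polynomial.aeval (Ideal.Quotient.mk I F)
          (f.charpoly.divX * Polynomial.X + Polynomial.C a) = 0 := by
        rw [ha, Polynomial.divX_mul_X_add]; exact hCH
      rw [map_add, map_mul, Polynomial.aeval_X, Polynomial.aeval_C] at h3
      simp only [Set.mem_singleton_iff, map_sub, map_mul, ← halgmap, hs]
      linear_combination h3
    have h4 : Polynomial.aeval (MvPolynomial.X (0 : Fin (m + 1)) :
        MvPolynomial (Fin (m + 1)) k) a - s * F ∈ I :=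
      Ideal.Quotient.eq_zero_iff_mem.mp hdecomp
    have h5 : Polynomial.aeval (MvPolynomial.X (0 : Fin (m + 1)) :
        MvPolynomial (Fin (m + 1)) k) a
        = (Polynomial.aeval (MvPolynomial.X (0 : Fin (m + 1)) :
          MvPolynomial (Fin (m + 1)) k) a - s * F) + s * F := by ring
    rw [h5]
    exact Ideal.add_mem _ (Ideal.mem_sup_left h4)
      (Ideal.mem_sup_right (Ideal.mem_span_singleton.mpr (dvd_mul_left F s)))
  -- nonvanishing
  have hne : a ≠ 0 := by
    intro ha0
    set b := Module.Free.chooseBasis (Polynomial k)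
      (MvPolynomial (Fin (m + 1)) k ⧸ I) with hb
    clear_value b
    set M := LinearMap.toMatrix b b f with hMdef
    clear_value M
    have hM : M.charpoly = f.charpoly := by
      rw [hMdef]; exact LinearMap.charpoly_toMatrix f b
    have hpoint : ∀ c : k, ∃ x, x ∈ MvPolynomial.zeroLocus k I ∩ {x | eval x F = 0}
        ∧ x 0 = c := by
      intro c
      set φ := Polynomial.evalRingHom c with hφ
      clear_value φ
      have hdet : (M.map φ).det = 0 := by
        have h6 := Matrix.det_eq_sign_charpoly_coeff (M.map φ)
        rw [Matrix.charpoly_map, hM, Polynomial.coeff_map, ← ha, ha0, map_zero,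
          mul_zero] at h6
        exact h6
      obtain ⟨v, hv0, hv⟩ := Matrix.exists_mulVec_eq_zero_iff.mpr hdet
      set g := ∑ i, Polynomial.C (v i) • b i with hg
      clear_value g
      have hreprg : ⇑(b.repr g) = fun i => Polynomial.C (v i) := by
        rw [hg]; exact b.repr_sum_self _
      have hrepr : ∀ j, b.repr (Ideal.Quotient.mk I F * g) j
          = M.mulVec (fun i => Polynomial.C (v i)) j := by
        intro j
        have h7 : Ideal.Quotient.mk I F * g = f g := by
          rw [hf, LinearMap.mulLeft_apply]
        rw [h7, hMdef, ← LinearMap.toMatrix_mulVec_repr b b f g, hreprg]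
      have hdvd : ∀ j, Polynomial.X - Polynomial.C c ∣
          b.repr (Ideal.Quotient.mk I F * g) j := by
        intro j
        rw [Polynomial.dvd_iff_isRoot, Polynomial.IsRoot.def, hrepr j]
        have h9 : Polynomial.eval c (M.mulVec (fun i => Polynomial.C (v i)) j)
            = (M.map ⇑φ).mulVec v j := by
          subst hφ
          simp [Matrix.mulVec, dotProduct, Matrix.map_apply,
            Polynomial.coe_evalRingHom, Polynomial.eval_finset_sum]
        exact h9.trans (by rw [hv]; rfl)
      choose u hu using hdvd
      set h := ∑ j, u j • b j with hhdef
      clear_value h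
      have hFg : Ideal.Quotient.mk I F * g = (Polynomial.X - Polynomial.C c) • h := by
        refine b.repr.injective (Finsupp.ext fun j => ?_)
        rw [hu j, map_smul, Finsupp.smul_apply, smul_eq_mul, hhdef]
        exact congrArg (fun t => (Polynomial.X - Polynomial.C c) * t)
          (congrFun (b.repr_sum_self u) j).symm
      set K := I ⊔ Ideal.span {MvPolynomial.X 0 - MvPolynomial.C c, F} with hK
      have e2 : Ideal.Quotient.mk I (MvPolynomial.X 0 - MvPolynomial.C c)
          = algebraMap (Polynomial k) _ (Polynomial.X - Polynomial.C c) := by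
        rw [halgmap]
        simp [MvPolynomial.algebraMap_eq]
      have hKne : K ≠ ⊤ := by
        intro htop
        have h1K : (1 : MvPolynomial (Fin (m + 1)) k) ∈ K := htop ▸ Submodule.mem_top
        rw [hK, show ({MvPolynomial.X (0 : Fin (m + 1)) - MvPolynomial.C c, F} :
            Set (MvPolynomial (Fin (m + 1)) k))
            = insert (MvPolynomial.X (0 : Fin (m + 1)) - MvPolynomial.C c) {F} from rfl,
          Ideal.span_insert] at h1K
        obtain ⟨y, hy, z, hz, hyz⟩ := Submodule.mem_sup.mp h1K
        obtain ⟨p', hp', q', hq', hpq⟩ := Submodule.mem_sup.mp hz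
        obtain ⟨p, hp⟩ := Ideal.mem_span_singleton.mp hp'
        obtain ⟨q, hq⟩ := Ideal.mem_span_singleton.mp hq'
        -- g = (X - C c) • w
        have hgz : g = (Polynomial.X - Polynomial.C c) •
            (Ideal.Quotient.mk I p * g + Ideal.Quotient.mk I q * h) := by
        -- 1 = y + p' + q'
          have e1 : (1 : MvPolynomial (Fin (m + 1)) k ⧸ I)
              = Ideal.Quotient.mk I ((MvPolynomial.X 0 - MvPolynomial.C c) * p)
                + Ideal.Quotient.mk I (F * q) := by
            have : (1 : MvPolynomial (Fin (m + 1)) k) = y + (p' + q') := by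
              rw [hpq, hyz]
            rw [← map_one (Ideal.Quotient.mk I), this, hp, hq]
            simp [Ideal.Quotient.eq_zero_iff_mem.mpr hy]
          calc g = (1 : MvPolynomial (Fin (m + 1)) k ⧸ I) * g := (one_mul g).symm
          _ = (Ideal.Quotient.mk I ((MvPolynomial.X 0 - MvPolynomial.C c) * p)
                + Ideal.Quotient.mk I (F * q)) * g := by rw [← e1]
          _ = (Polynomial.X - Polynomial.C c) •
              (Ideal.Quotient.mk I p * g + Ideal.Quotient.mk I q * h) := by
            rw [map_mul, map_mul, e2, Algebra.smul_def]
            have hFg' : Ideal.Quotient.mk I F * g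
                = algebraMap (Polynomial k) (MvPolynomial (Fin (m + 1)) k ⧸ I)
                  (Polynomial.X - Polynomial.C c) * h := by
              rw [hFg, Algebra.smul_def]
            linear_combination Ideal.Quotient.mk I q * hFg'
        have hvz : v = 0 := by
          funext i
          have h10 : Polynomial.C (v i) = (Polynomial.X - Polynomial.C c) *
              b.repr (Ideal.Quotient.mk I p * g + Ideal.Quotient.mk I q * h) i := by
            conv_lhs => rw [← congrFun hreprg i]
            rw [hgz, map_smul, Finsupp.smul_apply, smul_eq_mul]
            rw [← hgz]
          have h11 := congrArg (Polynomial.eval c) h10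
          simpa using h11
        exact hv0 hvz
      obtain ⟨Mx, hMmax, hKM⟩ := Ideal.exists_le_maximal K hKne
      obtain ⟨x, hx⟩ :=
        (MvPolynomial.isMaximal_iff_eq_vanishingIdeal_singleton (I := Mx)).mp hMmax
      refine ⟨x, ⟨?_, ?_⟩, ?_⟩
      · rw [MvPolynomial.mem_zeroLocus_iff]
        intro p hp
        have hpM : p ∈ Mx := hKM (Ideal.mem_sup_left hp)
        rw [hx] at hpM
        exact (MvPolynomial.mem_vanishingIdeal_singleton_iff x p).mp hpM
      · have hFM : F ∈ Mx := hKM (Ideal.mem_sup_right (Ideal.subset_span (by simp)))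
        rw [hx] at hFM
        exact (MvPolynomial.mem_vanishingIdeal_singleton_iff x F).mp hFM
      · have hXM : MvPolynomial.X 0 - MvPolynomial.C c ∈ Mx :=
          hKM (Ideal.mem_sup_right (Ideal.subset_span (by simp)))
        rw [hx] at hXM
        have := (MvPolynomial.mem_vanishingIdeal_singleton_iff x _).mp hXM
        simpa [sub_eq_zero] using this
    have hsub : (Set.univ : Set k) ⊆ (fun x : Fin (m + 1) → k => x 0) ''
        (MvPolynomial.zeroLocus k I ∩ {x | eval x F = 0}) := by
      intro c _
      obtain ⟨x, hx, hxc⟩ := hpoint c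
      exact ⟨x, hx, hxc⟩
    exact Set.infinite_univ ((hfin.image _).subset hsub)
  -- part 3
  refine ⟨hne, hmem, ?_⟩
  intro x hx hFx
  obtain ⟨y, hy, z, hz, hyz⟩ := Submodule.mem_sup.mp hmem
  obtain ⟨t, ht⟩ := Ideal.mem_span_singleton.mp hz
  have h12 : eval x (Polynomial.aeval (MvPolynomial.X (0 : Fin (m + 1)) :
      MvPolynomial (Fin (m + 1)) k) a) = 0 := by
    rw [← hyz, map_add, (show eval x y = 0 from MvPolynomial.mem_zeroLocus_iff.mp hx y hy), ht, map_mul, hFx,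
      zero_mul, add_zero]
  have h13 : (MvPolynomial.aeval x) (Polynomial.aeval (MvPolynomial.X (0 : Fin (m + 1))
      : MvPolynomial (Fin (m + 1)) k) a) = Polynomial.aeval (x 0) a := by
    rw [← Polynomial.aeval_algHom_apply]
    simp
  rw [show eval x (Polynomial.aeval (MvPolynomial.X (0 : Fin (m + 1)) :
      MvPolynomial (Fin (m + 1)) k) a) = (MvPolynomial.aeval x)
      (Polynomial.aeval (MvPolynomial.X (0 : Fin (m + 1)) :
      MvPolynomial (Fin (m + 1)) k) a) from by simp [MvPolynomial.aeval_def], h13] at h12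
  simpa using h12

/-- Let `I` be a radical ideal of `k[X₀,…,X_m]` which is the vanishing ideal
of its zero set `C`, such that `A := k[X₀,…,X_m]/I` is a finitely generated free module over
`k[X₀]` (acting through `X₀`).  If `C ∩ {F = 0}` is finite, then the constant term `ã` of the
characteristic polynomial `χ` of multiplication by `F` on `A` is nonzero and lies in the ideal
`I + (F)`; in particular `ã(x₀) = 0` for every `(x₀,…,x_m) ∈ C` with `F(x₀,…,x_m) = 0`. -/
theorem statement16 [Field k] [IsAlgClosed k] {m : ℕ} (hm : 1 ≤ m)
    (I : Ideal (MvPolynomial (Fin (m + 1)) k)) (hrad : I.IsRadical)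
    (hvan : I = MvPolynomial.vanishingIdeal k (MvPolynomial.zeroLocus k I))
    (F : MvPolynomial (Fin (m + 1)) k)
    (hfin : (MvPolynomial.zeroLocus k I ∩ {x | eval x F = 0}).Finite) :
    letI : Algebra (Polynomial k) (MvPolynomial (Fin (m + 1)) k ⧸ I) :=
      ((Polynomial.aeval (Ideal.Quotient.mk I (MvPolynomial.X (0 : Fin (m + 1)))) :
        Polynomial k →ₐ[k] MvPolynomial (Fin (m + 1)) k ⧸ I).toRingHom).toAlgebra
    ∀ (hfg : Module.Finite (Polynomial k) (MvPolynomial (Fin (m + 1)) k ⧸ I))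
      (hfree : Module.Free (Polynomial k) (MvPolynomial (Fin (m + 1)) k ⧸ I)),
      haveI := hfg
      haveI := hfree
      letI χ : Polynomial (Polynomial k) :=
        LinearMap.charpoly
          (LinearMap.mulLeft (Polynomial k) (Ideal.Quotient.mk I F))
      ((χ.coeff 0 ≠ 0) ∧
        (Polynomial.aeval (MvPolynomial.X (0 : Fin (m + 1)) :
            MvPolynomial (Fin (m + 1)) k) (χ.coeff 0) ∈ I ⊔ Ideal.span {F}) ∧
        (∀ x ∈ MvPolynomial.zeroLocus k I, eval x F = 0 →
          Polynomial.eval (x 0) (χ.coeff 0) = 0)) := by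
  intro hfg hfree
  exact @statement16_aux k _ _ m I hvan F hfin
    (((Polynomial.aeval (Ideal.Quotient.mk I (MvPolynomial.X (0 : Fin (m + 1)))) :
        Polynomial k →ₐ[k] MvPolynomial (Fin (m + 1)) k ⧸ I).toRingHom).toAlgebra)
    rfl hfg hfree
end
end

section
/- Let k be an algebraically closed field, V ⊆ k² a finite nonempty set, and λ_1, λ_2 ∈ k nonzero with the following properties: each of the maps (x,y) ↦ x, (x,y) ↦ x+λ_1y, (x,y) ↦ x+λ_2y is injective on V, and, setting m := ∏_{(x,y)∈V}(T−x), m_1 := ∏_{(x,y)∈V}(T−x−λ_1y), m_2 := ∏_{(x,y)∈V}(T−x−λ_2y) in k[T], the map (x,y) ↦ x+λ_2y is injective on W := {(x,y) ∈ k² : m(x)=0 and m_1(x+λ_1y)=0}. Then: (1) there exists a unique polynomial v ∈ k[T] with deg v < #V such that y = v(x) for every (x,y) ∈ V; (2) for every root α ∈ k of m, the monic greatest common divisor in k[Y] of the polynomials m_1(α+λ_1Y) and m_2(α+λ_2Y) equals Y − v(α). -/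
noncomputable section

open Polynomial

variable {k : Type*}

private lemma eval_prod_X_sub_C_eq_zero_iff {k : Type*} [Field k] {ι : Type*}
    (s : Finset ι) (f : ι → k) (t : k) :
    (∏ w ∈ s, (X - C (f w))).eval t = 0 ↔ ∃ w ∈ s, t = f w := by
  rw [eval_prod, Finset.prod_eq_zero_iff]
  simp [sub_eq_zero]

/-- bidimensional shape lemma.  Let `V ⊆ k²` be a finite nonempty set and
`λ₁, λ₂` nonzero scalars such that `x`, `x + λ₁y` and `x + λ₂y` are injective on `V` and,
with `m, m₁, m₂` the products of `T − x`, `T − (x+λ₁y)`, `T − (x+λ₂y)` over `V`, the form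
`x + λ₂y` is injective on `W = {m(x) = 0, m₁(x+λ₁y) = 0}`.  Then there is a unique `v ∈ k[T]`
with `deg v < #V` interpolating `y` in terms of `x` on `V`, and for every root `α` of `m` the
monic gcd of `m₁(α+λ₁Y)` and `m₂(α+λ₂Y)` — i.e. the monic generator of the ideal they
generate — is `Y − v(α)`. -/
theorem statement17 [Field k] [IsAlgClosed k]
    (V : Finset (k × k)) (hVne : V.Nonempty)
    (lam1 lam2 : k) (h1 : lam1 ≠ 0) (h2 : lam2 ≠ 0)
    (hinj0 : ∀ q ∈ V, ∀ q' ∈ V, q.1 = q'.1 → q = q')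
    (hinj1 : ∀ q ∈ V, ∀ q' ∈ V, q.1 + lam1 * q.2 = q'.1 + lam1 * q'.2 → q = q')
    (hinj2 : ∀ q ∈ V, ∀ q' ∈ V, q.1 + lam2 * q.2 = q'.1 + lam2 * q'.2 → q = q')
    (hinjW : ∀ q q' : k × k,
      (∏ v ∈ V, (X - C v.1)).eval q.1 = 0 →
      (∏ v ∈ V, (X - C (v.1 + lam1 * v.2))).eval (q.1 + lam1 * q.2) = 0 →
      (∏ v ∈ V, (X - C v.1)).eval q'.1 = 0 →
      (∏ v ∈ V, (X - C (v.1 + lam1 * v.2))).eval (q'.1 + lam1 * q'.2) = 0 →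
      q.1 + lam2 * q.2 = q'.1 + lam2 * q'.2 → q = q') :
    ∃ v : Polynomial k,
      -- (1) `v` is the unique polynomial of degree `< #V` with `y = v(x)` on `V`
      (v.natDegree < V.card ∧ ∀ q ∈ V, q.2 = v.eval q.1) ∧
      (∀ v' : Polynomial k,
        (v'.natDegree < V.card ∧ ∀ q ∈ V, q.2 = v'.eval q.1) → v' = v) ∧
      -- (2) for every root `α` of `m`, the monic gcd of `m₁(α+λ₁Y)` and `m₂(α+λ₂Y)` is
      -- `Y − v(α)`
      (∀ α : k, (∏ w ∈ V, (X - C w.1)).eval α = 0 →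
        Ideal.span {(∏ w ∈ V, (X - C (w.1 + lam1 * w.2))).comp (C α + C lam1 * X),
            (∏ w ∈ V, (X - C (w.1 + lam2 * w.2))).comp (C α + C lam2 * X)}
          = Ideal.span {(X : Polynomial k) - C (v.eval α)}) := by
  classical
  have hinjOn : Set.InjOn (Prod.fst : k × k → k) ↑V := fun q hq q' hq' h =>
    hinj0 q hq q' hq' h
  set v := Lagrange.interpolate V Prod.fst Prod.snd with hv
  have hvdeg : v.degree < V.card := Lagrange.degree_interpolate_lt _ hinjOn
  have hveval : ∀ q ∈ V, q.2 = v.eval q.1 := fun q hq =>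
    (Lagrange.eval_interpolate_at_node _ hinjOn hq).symm
  have hvnat : v.natDegree < V.card := by
    rcases eq_or_ne v 0 with h | h
    · simpa [h] using Finset.card_pos.mpr hVne
    · exact (natDegree_lt_iff_degree_lt h).mpr hvdeg
  refine ⟨v, ⟨hvnat, hveval⟩, ?_, ?_⟩
  · rintro v' ⟨hdeg', heval'⟩
    have hd : v'.degree < V.card :=
      lt_of_le_of_lt degree_le_natDegree (by exact_mod_cast hdeg')
    exact Lagrange.eq_interpolate_of_eval_eq _ hinjOn hd fun q hq => (heval' q hq).symm
  · intro α hα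
    obtain ⟨q0, hq0, hq0α⟩ := (eval_prod_X_sub_C_eq_zero_iff V Prod.fst α).mp hα
    set β := v.eval α with hβ
    have hβq0 : β = q0.2 := by rw [hβ, hq0α, ← hveval q0 hq0]
    set A := (∏ w ∈ V, (X - C (w.1 + lam1 * w.2))).comp (C α + C lam1 * X) with hA
    set B := (∏ w ∈ V, (X - C (w.1 + lam2 * w.2))).comp (C α + C lam2 * X) with hB
    have hevalA : ∀ t : k,
        A.eval t = (∏ w ∈ V, (X - C (w.1 + lam1 * w.2))).eval (α + lam1 * t) := by
      intro t; rw [hA, eval_comp]; simp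
    have hevalB : ∀ t : k,
        B.eval t = (∏ w ∈ V, (X - C (w.1 + lam2 * w.2))).eval (α + lam2 * t) := by
      intro t; rw [hB, eval_comp]; simp
    have hrootA : ∀ t : k, A.eval t = 0 ↔ ∃ w ∈ V, α + lam1 * t = w.1 + lam1 * w.2 := by
      intro t
      rw [hevalA t, eval_prod_X_sub_C_eq_zero_iff V (fun w => w.1 + lam1 * w.2)]
    have hrootB : ∀ t : k, B.eval t = 0 ↔ ∃ w ∈ V, α + lam2 * t = w.1 + lam2 * w.2 := by
      intro t
      rw [hevalB t, eval_prod_X_sub_C_eq_zero_iff V (fun w => w.1 + lam2 * w.2)]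
    have hdvdA : X - C β ∣ A := dvd_iff_isRoot.mpr (by
      rw [IsRoot, hrootA]; exact ⟨q0, hq0, by rw [hβq0, hq0α]⟩)
    have hdvdB : X - C β ∣ B := dvd_iff_isRoot.mpr (by
      rw [IsRoot, hrootB]; exact ⟨q0, hq0, by rw [hβq0, hq0α]⟩)
    -- `A` is squarefree
    have hfac : ∀ w : k × k, (X - C (w.1 + lam1 * w.2)).comp (C α + C lam1 * X)
        = C lam1 * (X - C ((w.1 + lam1 * w.2 - α) / lam1)) := by
      intro w
      rw [sub_comp, X_comp, C_comp, mul_sub, ← C_mul, mul_div_cancel₀ _ h1, map_sub]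
      ring
    set P1 := ∏ w ∈ V, (X - C ((w.1 + lam1 * w.2 - α) / lam1)) with hP1
    have hAprod : A = C (lam1 ^ V.card) * P1 := by
      rw [hA, prod_comp]
      simp_rw [hfac]
      rw [Finset.prod_mul_distrib, Finset.prod_const, hP1, ← C_pow]
    have hP1sq : Squarefree P1 := by
      apply Polynomial.Separable.squarefree
      rw [Polynomial.separable_prod_X_sub_C_iff']
      intro q hq q' hq' h
      apply hinj1 q hq q' hq'
      field_simp at h
      linear_combination h
    have huC : IsUnit (C (lam1 ^ V.card) : Polynomial k) :=
      isUnit_C.mpr (isUnit_iff_ne_zero.mpr (pow_ne_zero _ h1))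
    have hAsq : Squarefree A := by
      rw [hAprod]
      exact Squarefree.squarefree_of_dvd (huC.mul_left_dvd.mpr dvd_rfl) hP1sq
    have hP1ne : P1 ≠ 0 :=
      (monic_prod_of_monic _ _ fun w _ => monic_X_sub_C _).ne_zero
    have hAne : A ≠ 0 := by
      rw [hAprod]
      exact mul_ne_zero (by simpa using pow_ne_zero V.card h1) hP1ne
    set g := EuclideanDomain.gcd A B with hg
    have hgA : g ∣ A := EuclideanDomain.gcd_dvd_left A B
    have hgB : g ∣ B := EuclideanDomain.gcd_dvd_right A B
    have hg0 : g ≠ 0 := fun h => hAne (zero_dvd_iff.mp (h ▸ hgA))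
    have hβg : X - C β ∣ g := EuclideanDomain.dvd_gcd hdvdA hdvdB
    have hgsq : Squarefree g := Squarefree.squarefree_of_dvd hgA hAsq
    have hroots : ∀ r : k, g.eval r = 0 → r = β := by
      intro r hr
      have hrA : A.eval r = 0 := by
        obtain ⟨t, ht⟩ := hgA; rw [ht, eval_mul, hr, zero_mul]
      have hrB : B.eval r = 0 := by
        obtain ⟨t, ht⟩ := hgB; rw [ht, eval_mul, hr, zero_mul]
      obtain ⟨w, hw, hwr⟩ := (hrootB r).mp hrB
      have hm1r : (∏ v ∈ V, (X - C (v.1 + lam1 * v.2))).eval (α + lam1 * r) = 0 := by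
        rw [← hevalA r]; exact hrA
      have hmw : (∏ v ∈ V, (X - C v.1)).eval w.1 = 0 := by
        rw [eval_prod_X_sub_C_eq_zero_iff V Prod.fst]; exact ⟨w, hw, rfl⟩
      have hm1w : (∏ v ∈ V, (X - C (v.1 + lam1 * v.2))).eval (w.1 + lam1 * w.2) = 0 := by
        rw [eval_prod_X_sub_C_eq_zero_iff V (fun v => v.1 + lam1 * v.2)]
        exact ⟨w, hw, rfl⟩
      have hqw : ((α, r) : k × k) = w := hinjW (α, r) w hα hm1r hmw hm1w hwr
      have hr2 : r = w.2 := congrArg Prod.snd hqw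
      have hα1 : α = w.1 := congrArg Prod.fst hqw
      rw [hr2, hβ, hα1, ← hveval w hw]
    have hsplit : g.Splits := IsAlgClosed.splits g
    have hcard : g.roots.card = g.natDegree := (splits_iff_card_roots).mp hsplit
    have hallβ : ∀ x ∈ g.roots, β = x := fun x hx =>
      (hroots x (mem_roots'.mp hx).2).symm
    have hcount : g.roots.count β = Multiset.card g.roots :=
      Multiset.count_eq_card.mpr hallβ
    have hrm : g.rootMultiplicity β ≤ 1 := by
      by_contra hlt
      push_neg at hlt
      have h2 : (X - C β) ^ 2 ∣ g := (le_rootMultiplicity_iff hg0).mp hlt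
      exact not_isUnit_X_sub_C β (hgsq (X - C β) (by rwa [← sq]))
    have hdeg1 : g.natDegree ≤ 1 := by
      rw [← hcard, ← hcount, count_roots]; exact hrm
    have hassoc : Associated (X - C β) g :=
      associated_of_dvd_of_natDegree_le hβg hg0 (by rw [natDegree_X_sub_C]; exact hdeg1)
    calc Ideal.span {A, B} = Ideal.span {g} := (EuclideanDomain.span_gcd A B).symm
      _ = Ideal.span {X - C β} :=
        Ideal.span_singleton_eq_span_singleton.mpr hassoc.symm
end
end
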